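/- arXiv:1010.0425 — 3 statements merged into one kernel-verified Lean document; each statement's English description precedes it below -/
import Mathlib

section
/- Let A, B be self-adjoint operators on a finite-dimensional complex Hilbert space with C := B − A. Then ln Tr e^{B} − ln Tr e^{A} ≤ Tr(C e^{B}) / Tr e^{B}. -/
open Matrix

/-- Finite Jensen inequality for `Real.exp`. -/
lemma jensen_exp {n : ℕ} (w x : Fin n → ℝ) (hw : ∀ i, 0 ≤ w i)
    (h1 : ∑ i, w i = 1) :
    Real.exp (∑ i, w i * x i) ≤ ∑ i, w i * Real.exp (x i) := by
  simpa [smul_eq_mul] using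
    convexOn_exp.map_sum_le (t := Finset.univ) (w := w) (p := x)
      (fun i _ => hw i) h1 (fun i _ => Set.mem_univ _)

/-- The real core of the Peierls–Bogoliubov inequality. -/
lemma pb_core {n : ℕ} (hn : 0 < n) (lam a : Fin n → ℝ) (TA : ℝ)
    (hTA : ∑ i, Real.exp (a i) ≤ TA) :
    Real.log (∑ i, Real.exp (lam i)) - Real.log TA ≤
      (∑ i, (lam i - a i) * Real.exp (lam i)) / (∑ i, Real.exp (lam i)) := by
  have hne : (Finset.univ : Finset (Fin n)).Nonempty := by
    simpa [Finset.univ_nonempty_iff] using Fin.pos_iff_nonempty.mp hn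
  set Z : ℝ := ∑ i, Real.exp (lam i) with hZdef
  have hZ : 0 < Z := Finset.sum_pos (fun i _ => Real.exp_pos _) hne
  set w : Fin n → ℝ := fun i => Real.exp (lam i) / Z with hw
  have hwnn : ∀ i, 0 ≤ w i := fun i => div_nonneg (Real.exp_pos _).le hZ.le
  have hw1 : ∑ i, w i = 1 := by
    rw [hw, ← Finset.sum_div, ← hZdef, div_self hZ.ne']
  have hj := jensen_exp w (fun i => a i - lam i) hwnn hw1
  have hsum : ∑ i, w i * Real.exp (a i - lam i) = (∑ i, Real.exp (a i)) / Z := by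
    rw [Finset.sum_div]
    refine Finset.sum_congr rfl fun i _ => ?_
    rw [hw, Real.exp_sub]
    field_simp
  set t : ℝ := ∑ i, w i * (a i - lam i) with ht
  have hkey : Z * Real.exp t ≤ TA := by
    have : Z * Real.exp t ≤ Z * ((∑ i, Real.exp (a i)) / Z) := by
      rw [← hsum]
      exact mul_le_mul_of_nonneg_left hj hZ.le
    rw [mul_div_cancel₀ _ hZ.ne'] at this
    exact this.trans hTA
  have hlog : Real.log Z + t ≤ Real.log TA := by
    have h1 : Real.log (Z * Real.exp t) ≤ Real.log TA :=
      Real.log_le_log (by positivity) hkey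
    rwa [Real.log_mul hZ.ne' (Real.exp_pos t).ne', Real.log_exp] at h1
  have htval : -t = (∑ i, (lam i - a i) * Real.exp (lam i)) / Z := by
    rw [ht, ← Finset.sum_neg_distrib, Finset.sum_div]
    refine Finset.sum_congr rfl fun i _ => ?_
    rw [hw]
    field_simp
    ring
  linarith [hlog, htval.symm.le, htval.le]

lemma trace_mul_conj_diag {n : ℕ} (M U : Matrix (Fin n) (Fin n) ℂ) (d : Fin n → ℂ) :
    (M * (U * diagonal d * star U)).trace = ∑ i, (star U * M * U) i i * d i := by
  have h1 : M * (U * diagonal d * star U) = (M * U * diagonal d) * star U := by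
    simp only [Matrix.mul_assoc]
  rw [h1, Matrix.trace_mul_comm, ← Matrix.mul_assoc, ← Matrix.mul_assoc]
  simp [Matrix.trace, Matrix.diag, Matrix.mul_diagonal, mul_comm]

lemma conj_diag_apply {n : ℕ} (W : Matrix (Fin n) (Fin n) ℂ) (d : Fin n → ℂ) (i : Fin n) :
    (star W * diagonal d * W) i i = ∑ j, d j * (Complex.normSq (W j i) : ℂ) := by
  rw [Matrix.mul_apply]
  simp only [Matrix.mul_diagonal, Matrix.star_apply]
  refine Finset.sum_congr rfl fun j _ => ?_
  have h : (starRingEnd ℂ) (W j i) * W j i = (Complex.normSq (W j i) : ℂ) := by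
    rw [mul_comm, Complex.mul_conj]
  rw [mul_right_comm, show star (W j i) = (starRingEnd ℂ) (W j i) from rfl, h]
  ring

/-- Peierls–Bogoliubov convexity inequality: for self-adjoint operators `A`, `B` on a
finite-dimensional complex Hilbert space with `C = B - A`,
`ln Tr e^B − ln Tr e^A ≤ Tr(C e^B) / Tr e^B`. -/
theorem stmt5 (n : ℕ) (A B : Matrix (Fin n) (Fin n) ℂ)
    (hA : A.IsHermitian) (hB : B.IsHermitian) (C : Matrix (Fin n) (Fin n) ℂ)
    (hC : C = B - A) :
    Real.log ((NormedSpace.exp B).trace).re - Real.log ((NormedSpace.exp A).trace).re ≤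
      ((C * NormedSpace.exp B).trace).re / ((NormedSpace.exp B).trace).re := by
  rcases Nat.eq_zero_or_pos n with hn | hn
  · subst hn
    simp [Matrix.trace, Real.log_zero]
  -- notation
  set U : Matrix (Fin n) (Fin n) ℂ := (hB.eigenvectorUnitary : Matrix (Fin n) (Fin n) ℂ) with hUdef
  set V : Matrix (Fin n) (Fin n) ℂ := (hA.eigenvectorUnitary : Matrix (Fin n) (Fin n) ℂ) with hVdef
  set lam : Fin n → ℝ := hB.eigenvalues with hlam
  set mu : Fin n → ℝ := hA.eigenvalues with hmu
  set W : Matrix (Fin n) (Fin n) ℂ := star V * U with hWdef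
  set p : Fin n → Fin n → ℝ := fun i j => Complex.normSq (W j i) with hp
  set a : Fin n → ℝ := fun i => ∑ j, mu j * p i j with ha
  -- unitarity facts
  have hUU : U * star U = 1 := Matrix.mem_unitaryGroup_iff.mp hB.eigenvectorUnitary.2
  have hUU' : star U * U = 1 := Matrix.mem_unitaryGroup_iff'.mp hB.eigenvectorUnitary.2
  have hVV : V * star V = 1 := Matrix.mem_unitaryGroup_iff.mp hA.eigenvectorUnitary.2
  have hVV' : star V * V = 1 := Matrix.mem_unitaryGroup_iff'.mp hA.eigenvectorUnitary.2
  have hUinv : U⁻¹ = star U := Matrix.inv_eq_right_inv hUU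
  have hVinv : V⁻¹ = star V := Matrix.inv_eq_right_inv hVV
  have hUunit : IsUnit U := ⟨⟨U, star U, hUU, hUU'⟩, rfl⟩
  have hVunit : IsUnit V := ⟨⟨V, star V, hVV, hVV'⟩, rfl⟩
  have hWW : star W * W = 1 := by
    rw [hWdef, Matrix.star_mul, star_star, Matrix.mul_assoc, ← Matrix.mul_assoc V, hVV, Matrix.one_mul,
      hUU']
  -- exponentials via spectral theorem
  have expOfDiag : ∀ r : Fin n → ℝ,
      NormedSpace.exp (diagonal (fun i => (r i : ℂ))) =
        diagonal (fun i => (Real.exp (r i) : ℂ)) := by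
    intro r
    rw [Matrix.exp_diagonal, Pi.exp_def]
    simp only [← Complex.exp_eq_exp_ℂ, Complex.ofReal_exp]
  have expB : NormedSpace.exp B = U * diagonal (fun i => (Real.exp (lam i) : ℂ)) * star U := by
    have h0 : B = U * diagonal (fun i => ((lam i : ℝ) : ℂ)) * U⁻¹ := by
      rw [hUinv]; exact hB.spectral_theorem
    rw [h0, Matrix.exp_conj U _ hUunit, hUinv, expOfDiag]
  have expA : NormedSpace.exp A = V * diagonal (fun i => (Real.exp (mu i) : ℂ)) * star V := by
    have h0 : A = V * diagonal (fun i => ((mu i : ℝ) : ℂ)) * V⁻¹ := by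
      rw [hVinv]; exact hA.spectral_theorem
    rw [h0, Matrix.exp_conj V _ hVunit, hVinv, expOfDiag]
  -- diagonal entries
  have hUBU : star U * B * U = diagonal (fun i => ((lam i : ℝ) : ℂ)) :=
    by
      have h := hB.conjStarAlgAut_star_eigenvectorUnitary
      rw [Unitary.conjStarAlgAut_apply, Unitary.coe_star, star_star] at h
      exact h
  have hUAU : star U * A * U = star W * diagonal (fun i => ((mu i : ℝ) : ℂ)) * W := by
    rw [hWdef, Matrix.star_mul, star_star]
    have h0 : A = V * diagonal (fun i => ((mu i : ℝ) : ℂ)) * star V := hA.spectral_theorem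
    calc star U * A * U
        = star U * (V * diagonal (fun i => ((mu i : ℝ) : ℂ)) * star V) * U := by rw [← h0]
      _ = star U * V * diagonal (fun i => ((mu i : ℝ) : ℂ)) * (star V * U) := by
          simp only [Matrix.mul_assoc]
  have hUexpAU : star U * NormedSpace.exp A * U =
      star W * diagonal (fun i => (Real.exp (mu i) : ℂ)) * W := by
    rw [expA, hWdef, Matrix.star_mul, star_star]
    simp only [Matrix.mul_assoc]
  -- weights p sum to one
  have hpsum : ∀ i, ∑ j, p i j = 1 := by
    intro i
    have h1 : (star W * W) i i = 1 := by rw [hWW]; simp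
    have h2 : (star W * W) i i = ∑ j, (Complex.normSq (W j i) : ℂ) := by
      simp only [Matrix.mul_apply, Matrix.star_apply]
      refine Finset.sum_congr rfl fun j _ => ?_
      rw [show star (W j i) = (starRingEnd ℂ) (W j i) from rfl, mul_comm, Complex.mul_conj]
    have h3 : ((∑ j, (Complex.normSq (W j i) : ℂ)) : ℂ).re = (1 : ℂ).re := by
      rw [← h2, h1]
    simpa [Complex.re_sum, hp] using h3
  have hpnn : ∀ i j, 0 ≤ p i j := fun i j => Complex.normSq_nonneg _
  -- trace of exp B
  set Z : ℝ := ∑ i, Real.exp (lam i) with hZdef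
  have htrB : ((NormedSpace.exp B).trace).re = Z := by
    rw [expB]
    have h1 : (U * diagonal (fun i => (Real.exp (lam i) : ℂ)) * star U).trace =
        (diagonal (fun i => (Real.exp (lam i) : ℂ))).trace := by
      rw [Matrix.trace_mul_cycle, hUU', Matrix.one_mul]
    rw [h1]
    simp [Matrix.trace, Matrix.diag, Complex.re_sum, Complex.exp_ofReal_re, hZdef]
  -- trace (M * exp B) for M = B and M = A
  have htrBB : ((B * NormedSpace.exp B).trace).re = ∑ i, lam i * Real.exp (lam i) := by
    rw [expB, trace_mul_conj_diag, hUBU]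
    simp [Matrix.diagonal_apply_eq, Complex.re_sum, Complex.exp_ofReal_re]
  have htrAB : ((A * NormedSpace.exp B).trace).re = ∑ i, a i * Real.exp (lam i) := by
    rw [expB, trace_mul_conj_diag]
    have h1 : ∀ i, (star U * A * U) i i * (Real.exp (lam i) : ℂ) =
        ((a i * Real.exp (lam i) : ℝ) : ℂ) := by
      intro i
      rw [hUAU, conj_diag_apply]
      have hcast : ((a i : ℝ) : ℂ) = ∑ j, ((mu j : ℝ) : ℂ) * ((p i j : ℝ) : ℂ) := by
        rw [ha]; push_cast; rfl
      rw [Complex.ofReal_mul, hcast, Finset.sum_mul]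
    rw [Finset.sum_congr rfl fun i _ => h1 i]
    simp [Complex.re_sum, Complex.exp_ofReal_re]
  -- trace of exp A, bounded below via Peierls
  have htrA : ((NormedSpace.exp A).trace).re = ∑ i, ∑ j, Real.exp (mu j) * p i j := by
    have h1 : (NormedSpace.exp A).trace =
        (star U * NormedSpace.exp A * U).trace := by
      rw [Matrix.trace_mul_cycle, hUU, Matrix.one_mul]
    rw [h1, hUexpAU]
    have h2 : ∀ i, (star W * diagonal (fun j => (Real.exp (mu j) : ℂ)) * W) i i =
        ((∑ j, Real.exp (mu j) * p i j : ℝ) : ℂ) := by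
      intro i
      rw [conj_diag_apply]
      push_cast [hp]
      rfl
    rw [Matrix.trace]
    simp only [Matrix.diag]
    rw [Finset.sum_congr rfl fun i (_ : i ∈ Finset.univ) => h2 i]
    simp [Complex.re_sum, Complex.exp_ofReal_re]
  have hPeierls : ∑ i, Real.exp (a i) ≤ ((NormedSpace.exp A).trace).re := by
    rw [htrA]
    refine Finset.sum_le_sum fun i _ => ?_
    have := jensen_exp (fun j => p i j) mu (hpnn i) (hpsum i)
    calc Real.exp (a i) = Real.exp (∑ j, p i j * mu j) := by
          rw [ha]; congr 1; exact Finset.sum_congr rfl fun j _ => mul_comm _ _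
      _ ≤ ∑ j, p i j * Real.exp (mu j) := this
      _ = ∑ j, Real.exp (mu j) * p i j := Finset.sum_congr rfl fun j _ => mul_comm _ _
  -- trace of C * exp B
  have htrC : ((C * NormedSpace.exp B).trace).re = ∑ i, (lam i - a i) * Real.exp (lam i) := by
    rw [hC, Matrix.sub_mul, Matrix.trace_sub, Complex.sub_re, htrBB, htrAB, ← Finset.sum_sub_distrib]
    refine Finset.sum_congr rfl fun i _ => ?_
    ring
  -- finish
  rw [htrB, htrC]
  exact pb_core hn lam a _ hPeierls
end

section
/- Let A be a self-adjoint operator on a finite-dimensional complex Hilbert space H, and let P be an orthogonal projection with range K. Then Tr_K e^{P A P|_K} ≤ Tr_H e^{A}. -/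
open Matrix

lemma trace_exp_hermitian {k : ℕ} {H : Matrix (Fin k) (Fin k) ℂ} (hH : H.IsHermitian) :
    ((NormedSpace.exp H).trace).re = ∑ i, Real.exp (hH.eigenvalues i) := by
  set U : Matrix (Fin k) (Fin k) ℂ := (hH.eigenvectorUnitary : Matrix (Fin k) (Fin k) ℂ) with hU
  have hmem := hH.eigenvectorUnitary.prop
  rw [Unitary.mem_iff] at hmem
  have hUnit : IsUnit U :=
    @isUnit_of_invertible _ _ U (invertibleOfRightInverse (a := U) (b := star U) hmem.2)
  have hUinv : U⁻¹ = star U := Matrix.inv_eq_left_inv hmem.1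
  have h1 : NormedSpace.exp H
      = U * NormedSpace.exp (diagonal (RCLike.ofReal ∘ hH.eigenvalues)) * U⁻¹ := by
    rw [← Matrix.exp_conj U _ hUnit, hUinv]
    exact congrArg _ hH.spectral_theorem
  rw [h1, Matrix.trace_mul_cycle, hUinv, hmem.1, Matrix.one_mul,
    Matrix.exp_diagonal, Matrix.trace_diagonal]
  rw [Complex.re_sum]
  refine Finset.sum_congr rfl fun i _ => ?_
  have : NormedSpace.exp ((RCLike.ofReal ∘ hH.eigenvalues) i : ℂ)
      = Complex.exp ((hH.eigenvalues i : ℂ)) := by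
    rw [Complex.exp_eq_exp_ℂ]; rfl
  rw [Pi.exp_def]; simp only []; rw [this, ← Complex.ofReal_exp, Complex.ofReal_re]


/-- Restricting a self-adjoint operator to a subspace decreases the partition function:
if `V : K → H` is an isometry (`Vᴴ V = 1`), so that `P = V Vᴴ` is the orthogonal projection
onto its range, then `Tr_K e^{Vᴴ A V} ≤ Tr_H e^A`. -/
theorem stmt6 (n m : ℕ) (A : Matrix (Fin n) (Fin n) ℂ) (hA : A.IsHermitian)
    (V : Matrix (Fin n) (Fin m) ℂ) (hV : Vᴴ * V = 1) :
    ((NormedSpace.exp (Vᴴ * A * V)).trace).re ≤ ((NormedSpace.exp A).trace).re := by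
  have hB : (Vᴴ * A * V).IsHermitian := Matrix.isHermitian_conjTranspose_mul_mul V hA
  set U : Matrix (Fin n) (Fin n) ℂ := (hA.eigenvectorUnitary : Matrix (Fin n) (Fin n) ℂ) with hUdef
  set S : Matrix (Fin m) (Fin m) ℂ := (hB.eigenvectorUnitary : Matrix (Fin m) (Fin m) ℂ) with hSdef
  have hUmem := hA.eigenvectorUnitary.prop
  have hSmem := hB.eigenvectorUnitary.prop
  rw [Unitary.mem_iff] at hUmem hSmem
  set M : Matrix (Fin n) (Fin m) ℂ := star U * V * S with hMdef
  set μ : Fin n → ℝ := hA.eigenvalues with hμdef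
  set ν : Fin m → ℝ := hB.eigenvalues with hνdef
  set p : Fin n → Fin m → ℝ := fun l i => Complex.normSq (M l i) with hpdef
  have hmc : ∀ z : ℂ, z * star z = ((Complex.normSq z : ℝ) : ℂ) := fun z => by
    rw [Complex.star_def]; exact Complex.mul_conj z
  have hMH : Mᴴ = Sᴴ * (Vᴴ * U) := by
    rw [hMdef]
    simp [conjTranspose_mul, Matrix.mul_assoc, star_eq_conjTranspose]
  -- M is an isometry
  have hMM : Mᴴ * M = 1 := by
    rw [hMH, hMdef, Matrix.mul_assoc (star U) V S,
      Matrix.mul_assoc Sᴴ (Vᴴ * U) _, ← Matrix.mul_assoc (Vᴴ * U) (star U) (V * S),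
      Matrix.mul_assoc Vᴴ U (star U), hUmem.2, Matrix.mul_one,
      ← Matrix.mul_assoc Vᴴ V S, hV, Matrix.one_mul]
    simpa [star_eq_conjTranspose] using hSmem.1
  -- diagonalization of B transported through M
  have hD : Mᴴ * (Matrix.diagonal (RCLike.ofReal ∘ μ : Fin n → ℂ) * M) = Matrix.diagonal (RCLike.ofReal ∘ ν : Fin m → ℂ) := by
    calc Mᴴ * (Matrix.diagonal (RCLike.ofReal ∘ μ : Fin n → ℂ) * M)
        = star S * (Vᴴ * (U * Matrix.diagonal (RCLike.ofReal ∘ μ) * star U) * V) * S := by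
          rw [hMH, hMdef]
          simp only [Matrix.mul_assoc, star_eq_conjTranspose]
      _ = star S * (Vᴴ * A * V) * S := by rw [hA.spectral_theorem, Unitary.conjStarAlgAut_apply]
      _ = Matrix.diagonal (RCLike.ofReal ∘ ν) := by
          rw [← hB.conjStarAlgAut_star_eigenvectorUnitary, Unitary.conjStarAlgAut_apply,
            Unitary.coe_star, star_star]
  -- eigenvalues of B as convex combinations
  have hν : ∀ i, (ν i : ℂ) = ∑ l, ((μ l * p l i : ℝ) : ℂ) := by
    intro i
    have h := congrFun (congrFun hD i) i
    rw [Matrix.mul_apply, Matrix.diagonal_apply_eq] at h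
    rw [show ((RCLike.ofReal ∘ ν) i : ℂ) = (ν i : ℂ) from rfl] at h
    rw [← h]
    refine Finset.sum_congr rfl fun l _ => ?_
    rw [Matrix.diagonal_mul, Matrix.conjTranspose_apply]
    have hco : ((RCLike.ofReal ∘ μ) l : ℂ) = ((μ l : ℝ) : ℂ) := rfl
    rw [hco]
    calc star (M l i) * (((μ l : ℝ) : ℂ) * M l i)
        = ((μ l : ℝ) : ℂ) * (M l i * star (M l i)) := by ring
      _ = ((μ l : ℝ) : ℂ) * ((p l i : ℝ) : ℂ) := by rw [hmc]
      _ = ((μ l * p l i : ℝ) : ℂ) := by push_cast; ring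
  have hνr : ∀ i, ν i = ∑ l, μ l * p l i := by
    intro i
    have := congrArg Complex.re (hν i)
    simpa [Complex.re_sum] using this
  -- columns of |M|² sum to one
  have hp0 : ∀ l i, 0 ≤ p l i := fun l i => Complex.normSq_nonneg _
  have hcol : ∀ i, ∑ l, p l i = 1 := by
    intro i
    have h := congrFun (congrFun hMM i) i
    rw [Matrix.mul_apply, Matrix.one_apply_eq] at h
    have h2 : (∑ l, ((p l i : ℝ) : ℂ)) = 1 := by
      rw [← h]
      refine Finset.sum_congr rfl fun l _ => ?_
      rw [Matrix.conjTranspose_apply,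
        show (star (M l i)) * M l i = M l i * star (M l i) from mul_comm _ _, hmc]
    have := congrArg Complex.re h2
    simpa [Complex.re_sum] using this
  -- rows of |M|² sum to at most one
  have hrow : ∀ l, ∑ i, p l i ≤ 1 := by
    intro l
    set P : Matrix (Fin n) (Fin n) ℂ := M * Mᴴ with hPdef
    have hPP : P * P = P := by
      rw [hPdef, Matrix.mul_assoc M Mᴴ (M * Mᴴ), ← Matrix.mul_assoc Mᴴ M Mᴴ, hMM,
        Matrix.one_mul]
    have hPH : Pᴴ = P := by rw [hPdef]; simp [conjTranspose_mul]
    set x : ℝ := ∑ i, p l i with hxdef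
    have hPll : P l l = ((x : ℝ) : ℂ) := by
      rw [hPdef, Matrix.mul_apply, hxdef]
      push_cast
      refine Finset.sum_congr rfl fun i _ => ?_
      rw [Matrix.conjTranspose_apply, hmc]
    have hsq : ∀ k, P k l = star (P l k) := by
      intro k
      rw [← hPH, Matrix.conjTranspose_apply, hPH]
    have hPPll : (∑ k, ((Complex.normSq (P l k) : ℝ) : ℂ)) = ((x : ℝ) : ℂ) := by
      have h := congrFun (congrFun hPP l) l
      rw [Matrix.mul_apply] at h
      rw [← hPll, ← h]
      refine Finset.sum_congr rfl fun k _ => ?_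
      rw [hsq k, hmc]
    have hre : (∑ k, Complex.normSq (P l k)) = x := by
      have := congrArg Complex.re hPPll
      simpa [Complex.re_sum] using this
    have hx2 : x ^ 2 ≤ x := by
      have h1 : Complex.normSq (P l l) ≤ ∑ k, Complex.normSq (P l k) :=
        Finset.single_le_sum (f := fun k => Complex.normSq (P l k))
          (fun k _ => Complex.normSq_nonneg _) (Finset.mem_univ l)
      rw [hre, hPll, Complex.normSq_ofReal] at h1
      nlinarith [h1]
    nlinarith [hx2]
  -- Peierls–Bogoliubov via Jensen
  rw [trace_exp_hermitian hB, trace_exp_hermitian hA, ← hμdef, ← hνdef]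
  calc ∑ i, Real.exp (ν i) = ∑ i, Real.exp (∑ l, p l i * μ l) := by
        refine Finset.sum_congr rfl fun i _ => ?_
        rw [hνr i]
        congr 1
        exact Finset.sum_congr rfl fun l _ => mul_comm _ _
    _ ≤ ∑ i, ∑ l, p l i * Real.exp (μ l) := by
        refine Finset.sum_le_sum fun i _ => ?_
        simpa [smul_eq_mul] using
          convexOn_exp.map_sum_le (fun l _ => hp0 l i) (hcol i) (fun l _ => Set.mem_univ (μ l))
    _ = ∑ l, (∑ i, p l i) * Real.exp (μ l) := by
        rw [Finset.sum_comm]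
        exact Finset.sum_congr rfl fun l _ => (Finset.sum_mul _ _ _).symm
    _ ≤ ∑ l, Real.exp (μ l) := by
        refine Finset.sum_le_sum fun l _ => ?_
        calc (∑ i, p l i) * Real.exp (μ l) ≤ 1 * Real.exp (μ l) :=
              mul_le_mul_of_nonneg_right (hrow l) (Real.exp_nonneg _)
          _ = Real.exp (μ l) := one_mul _
end

section
/- Consider the function ρ(μ, η) := I(μ) + |η|²/μ² for μ < 0, η ∈ ℂ, where I : (−∞, 0) → ℝ is continuous, strictly increasing, with ρ_c := sup_{μ<0} I(μ) < ∞ and I extends continuously to I(0) = ρ_c. Fix ρ̄ > ρ_c. For each η ≠ 0 let μ(η) < 0 solve ρ̄ = I(μ(η)) + |η|²/μ(η)². Then as |η| → 0, μ(η) → 0 and |η|²/μ(η)² → ρ̄ − ρ_c. -/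
open Filter

/-- Quasi-average condensate equation: let `I` be continuous on `(−∞, 0]`, strictly
increasing on `(−∞, 0)`, with finite critical density `ρ_c = I(0) = sup_{μ<0} I(μ)`.
Fix `ρ̄ > ρ_c` and for each `η ≠ 0` let `μ(η) < 0` solve `ρ̄ = I(μ(η)) + |η|²/μ(η)²`.
Then as `|η| → 0`, `μ(η) → 0` and `|η|²/μ(η)² → ρ̄ − ρ_c`. -/
theorem stmt17 (I : ℝ → ℝ)
    (hcont : ContinuousOn I (Set.Iic 0))
    (hmono : StrictMonoOn I (Set.Iio 0))
    (hsup : ∀ m < (0 : ℝ), I m ≤ I 0)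
    (ρbar : ℝ) (hρ : I 0 < ρbar)
    (μ : ℂ → ℝ)
    (hμneg : ∀ η : ℂ, η ≠ 0 → μ η < 0)
    (hμeq : ∀ η : ℂ, η ≠ 0 → ρbar = I (μ η) + ‖η‖ ^ 2 / (μ η) ^ 2) :
    Tendsto μ (nhdsWithin 0 {η : ℂ | η ≠ 0}) (nhds 0) ∧
    Tendsto (fun η : ℂ => ‖η‖ ^ 2 / (μ η) ^ 2)
      (nhdsWithin 0 {η : ℂ | η ≠ 0}) (nhds (ρbar - I 0)) := by
  set c : ℝ := ρbar - I 0 with hc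
  have hcpos : 0 < c := sub_pos.mpr hρ
  have hμsqpos : ∀ η : ℂ, η ≠ 0 → 0 < (μ η) ^ 2 := fun η hη =>
    pow_pos (neg_pos.mpr (hμneg η hη)) 2 |>.trans_le (by rw [neg_pow]; ring_nf; simp)
  have key : ∀ η : ℂ, η ≠ 0 → c ≤ ‖η‖ ^ 2 / (μ η) ^ 2 := by
    intro η hη
    have h1 := hμeq η hη
    have h2 := hsup (μ η) (hμneg η hη)
    have : ‖η‖ ^ 2 / (μ η) ^ 2 = ρbar - I (μ η) := by linarith
    rw [this]; simp only [hc]; linarith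
  have hbound : ∀ η : ℂ, η ≠ 0 → |μ η| ≤ ‖η‖ / Real.sqrt c := by
    intro η hη
    have hμ2 := hμsqpos η hη
    have hk := key η hη
    have hsq : (μ η) ^ 2 ≤ ‖η‖ ^ 2 / c := by
      rw [le_div_iff₀ hcpos]
      have := (le_div_iff₀ hμ2).mp hk
      linarith
    calc |μ η| = Real.sqrt ((μ η) ^ 2) := (Real.sqrt_sq_eq_abs _).symm
      _ ≤ Real.sqrt (‖η‖ ^ 2 / c) := Real.sqrt_le_sqrt hsq
      _ = ‖η‖ / Real.sqrt c := by
          rw [Real.sqrt_div (sq_nonneg _), Real.sqrt_sq (norm_nonneg η)]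
  have habs : Tendsto (fun η : ℂ => ‖η‖ / Real.sqrt c)
      (nhdsWithin 0 {η : ℂ | η ≠ 0}) (nhds 0) := by
    have h0 : Tendsto (fun η : ℂ => ‖η‖) (nhds (0 : ℂ)) (nhds 0) := by
      simpa using continuous_norm.tendsto (0 : ℂ)
    simpa using (h0.div_const (Real.sqrt c)).mono_left nhdsWithin_le_nhds
  have h1 : Tendsto μ (nhdsWithin 0 {η : ℂ | η ≠ 0}) (nhds 0) := by
    apply squeeze_zero_norm' _ habs
    filter_upwards [self_mem_nhdsWithin] with η hη
    simpa [Real.norm_eq_abs] using hbound η hη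
  refine ⟨h1, ?_⟩
  have h1' : Tendsto μ (nhdsWithin 0 {η : ℂ | η ≠ 0}) (nhdsWithin 0 (Set.Iic 0)) := by
    apply tendsto_nhdsWithin_of_tendsto_nhds_of_eventually_within _ h1
    filter_upwards [self_mem_nhdsWithin] with η hη using (hμneg η hη).le
  have hI : Tendsto (fun η : ℂ => I (μ η)) (nhdsWithin 0 {η : ℂ | η ≠ 0}) (nhds (I 0)) :=
    (hcont 0 Set.self_mem_Iic).tendsto.comp h1'
  have h2 : Tendsto (fun η : ℂ => ρbar - I (μ η)) (nhdsWithin 0 {η : ℂ | η ≠ 0})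
      (nhds (ρbar - I 0)) := tendsto_const_nhds.sub hI
  apply h2.congr'
  filter_upwards [self_mem_nhdsWithin] with η hη
  have := hμeq η hη
  linarith
end
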